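/- Along the scaled analytic ray μ_α(x) = α z_T(x), the witness output is the exponential interpolation S_k(μ_α(x)) = T_{x,k}^α T̄_k^{1−α} / Σ_j T_{x,j}^α T̄_j^{1−α}. In particular, at α = 0 the witness outputs T̄ and at α = 1 it outputs T_x. -/

import Mathlib

open Finset

/-- Dot product on `Fin n → ℝ`. -/
def dot {n : ℕ} (u v : Fin n → ℝ) : ℝ := ∑ i, u i * v i

/-- Scaled analytic ray: along `μ_α(x) = α z_T(x)` the witness output is the exponential
interpolation `S_k(μ_α(x)) = T_{x,k}^α T̄_k^{1−α} / ∑_j T_{x,j}^α T̄_j^{1−α}`; in particular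
at `α = 0` the witness outputs `T̄` and at `α = 1` it outputs `T_x`. -/
theorem scaled_ray_exponential_interpolation {K dz : ℕ} {X : Type*}
    (hK : 2 ≤ K)
    (β : ℝ) (hβ : 0 < β)
    (v : Fin K → Fin dz → ℝ)
    (hvsum : ∑ k, v k = 0)
    (hvnorm : ∀ i, dot (v i) (v i) = 1)
    (hvcross : ∀ i j, i ≠ j → dot (v i) (v j) = -1 / ((K : ℝ) - 1))
    (T : X → Fin K → ℝ) (hT0 : ∀ x k, 0 < T x k) (hT1 : ∀ x, ∑ k, T x k = 1)
    (Tbar : Fin K → ℝ) (hTbar0 : ∀ k, 0 < Tbar k) (hTbar1 : ∑ k, Tbar k = 1)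
    (r : X → Fin K → ℝ)
    (hr : ∀ x k, r x k =
      Real.log (T x k / Tbar k) - (1 / (K : ℝ)) * ∑ j, Real.log (T x j / Tbar j))
    (zT : X → Fin dz → ℝ)
    (hzT : ∀ x, zT x = (((K : ℝ) - 1) / ((K : ℝ) * β)) • ∑ k, r x k • v k)
    (S : (Fin dz → ℝ) → Fin K → ℝ)
    (hS : ∀ z k, S z k =
      Real.exp (β * dot (v k) z + Real.log (Tbar k)) /
        ∑ j, Real.exp (β * dot (v j) z + Real.log (Tbar j))) :
    (∀ (α : ℝ) (x : X) (k : Fin K),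
        S (α • zT x) k =
          T x k ^ α * Tbar k ^ (1 - α) / ∑ j, T x j ^ α * Tbar j ^ (1 - α))
      ∧ (∀ x k, S ((0 : ℝ) • zT x) k = Tbar k)
      ∧ (∀ x k, S ((1 : ℝ) • zT x) k = T x k) := by

  have hKR : (2:ℝ) ≤ (K:ℝ) := by exact_mod_cast hK
  have hK0 : (K:ℝ) ≠ 0 := by linarith
  have hK1 : (K:ℝ) - 1 ≠ 0 := by linarith
  have hβ0 : β ≠ 0 := ne_of_gt hβ
  -- sum of centered log-odds is zero
  have hrsum : ∀ x, ∑ k, r x k = 0 := by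
    intro x
    simp only [hr]
    rw [Finset.sum_sub_distrib, Finset.sum_const, Finset.card_univ, Fintype.card_fin]
    field_simp
    rw [nsmul_eq_mul, mul_div_assoc', mul_div_cancel_left₀ _ hK0, sub_self]
  -- dot with scaled vector
  have hdotsmul : ∀ (u : Fin dz → ℝ) (a : ℝ) (w : Fin dz → ℝ),
      dot u (a • w) = a * dot u w := by
    intro u a w
    simp [dot, Finset.mul_sum]
    apply Finset.sum_congr rfl
    intro i _
    ring
  -- key dot product identity
  have hdot : ∀ x k, dot (v k) (zT x) = r x k / β := by
    intro x k
    have h1 : dot (v k) (zT x)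
        = (((K : ℝ) - 1) / ((K : ℝ) * β)) * ∑ j, r x j * dot (v k) (v j) := by
      rw [hzT]
      simp only [dot, Pi.smul_apply, Finset.sum_apply, smul_eq_mul, Finset.mul_sum]
      rw [Finset.sum_comm]
      apply Finset.sum_congr rfl
      intro j _
      apply Finset.sum_congr rfl
      intro i _
      ring
    have h2 : ∑ j, r x j * dot (v k) (v j) = r x k * ((K:ℝ) / ((K:ℝ) - 1)) := by
      rw [← Finset.add_sum_erase _ _ (Finset.mem_univ k), hvnorm]
      have he : ∑ j ∈ Finset.univ.erase k, r x j * dot (v k) (v j)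
          = (∑ j ∈ Finset.univ.erase k, r x j) * (-1 / ((K:ℝ) - 1)) := by
        rw [Finset.sum_mul]
        apply Finset.sum_congr rfl
        intro j hj
        rw [hvcross k j (Ne.symm (Finset.ne_of_mem_erase hj))]
      rw [he, Finset.sum_erase_eq_sub (Finset.mem_univ k), hrsum]
      field_simp
      ring
    rw [h1, h2]
    field_simp
  -- main formula
  have main : ∀ (α : ℝ) (x : X) (k : Fin K),
      S (α • zT x) k =
        T x k ^ α * Tbar k ^ (1 - α) / ∑ j, T x j ^ α * Tbar j ^ (1 - α) := by
    intro α x k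
    set c : ℝ := (1 / (K : ℝ)) * ∑ j, Real.log (T x j / Tbar j) with hc
    have hexp : ∀ j : Fin K,
        Real.exp (β * dot (v j) (α • zT x) + Real.log (Tbar j))
          = Real.exp (-(α * c)) * (T x j ^ α * Tbar j ^ (1 - α)) := by
      intro j
      rw [hdotsmul, hdot]
      have harg : β * (α * (r x j / β)) + Real.log (Tbar j)
          = α * Real.log (T x j / Tbar j) + (-(α * c)) + Real.log (Tbar j) := by
        have hb : β * (α * (r x j / β)) = α * r x j := by
          field_simp
        rw [hb, hr, hc]
        ring
      rw [harg, Real.exp_add, Real.exp_add]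
      have h1 : Real.exp (α * Real.log (T x j / Tbar j))
          = (T x j / Tbar j) ^ α := by
        rw [Real.rpow_def_of_pos (div_pos (hT0 x j) (hTbar0 j))]
        ring_nf
      have h2 : Real.exp (Real.log (Tbar j)) = Tbar j := Real.exp_log (hTbar0 j)
      rw [h1, h2, Real.div_rpow (le_of_lt (hT0 x j)) (le_of_lt (hTbar0 j))]
      have h3 : Tbar j ^ (1 - α) = Tbar j / Tbar j ^ α := by
        rw [Real.rpow_sub (hTbar0 j), Real.rpow_one]
      rw [h3]
      have h4 : (Tbar j : ℝ) ^ α ≠ 0 := ne_of_gt (Real.rpow_pos_of_pos (hTbar0 j) α)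
      field_simp
    rw [hS]
    simp only [hexp]
    rw [← Finset.mul_sum, mul_div_mul_left _ _ (Real.exp_ne_zero _)]
  refine ⟨main, ?_, ?_⟩
  · intro x k
    rw [main 0 x k]
    simp [Real.rpow_zero, Real.rpow_one, hTbar1]
  · intro x k
    rw [main 1 x k]
    simp [Real.rpow_zero, Real.rpow_one, hT1 x]
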